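/- arXiv:2206.03479 — 4 statements merged into one kernel-verified Lean document; each statement's English description precedes it below -/
import Mathlib

section
/- For every squarefree ℓ ≤ Δ one has |ρ_ℓ| ≤ 1. -/
open Finset

/-- The multiplicative function supported on squarefree integers with
`h(p) = g(p) / (1 - g(p))` at primes. -/
noncomputable def hfun (g : ℕ → ℝ) (d : ℕ) : ℝ :=
  if Squarefree d then ∏ p ∈ d.primeFactors, g p / (1 - g p) else 0

lemma gfun_prod (g : ℕ → ℝ) (hg1 : g 1 = 1)
    (hgmult : ∀ m n : ℕ, Nat.Coprime m n → g (m * n) = g m * g n)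
    {n : ℕ} (hn : Squarefree n) : g n = ∏ p ∈ n.primeFactors, g p := by
  rw [Nat.multiplicative_factorization g hgmult hg1 hn.ne_zero]
  rw [Finsupp.prod]
  refine Finset.prod_congr rfl fun p hp => ?_
  have h1 : n.factorization p = 1 := by
    have hle := (Nat.squarefree_iff_factorization_le_one hn.ne_zero).mp hn p
    have hge : 1 ≤ n.factorization p := by
      have := (Nat.support_factorization n) ▸ hp; have := Finsupp.mem_support_iff.mp this
      omega
    omega
  rw [h1, pow_one]

/-- **Boundedness of the Selberg sieve weights.** For every squarefree `ℓ ≤ Δ`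
one has `|ρ_ℓ| ≤ 1`, where `ρ_ℓ = (μ(ℓ)/g(ℓ)) Σ_{d ≤ Δ, ℓ | d, d squarefree} g(d) y_d`,
`y_d = H⁻¹ log(Δ/d)` and `H = Σ_{d ≤ Δ, d squarefree} h(d) log(Δ/d)`. -/
theorem selberg_weights_bounded
    (Δ : ℝ) (hΔ : 2 ≤ Δ)
    (g : ℕ → ℝ) (hg1 : g 1 = 1)
    (hgmult : ∀ m n : ℕ, Nat.Coprime m n → g (m * n) = g m * g n)
    (hgp : ∀ p : ℕ, p.Prime → (p : ℝ) ≤ Δ → 0 < g p ∧ g p < 1)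
    (H : ℝ)
    (hH : H = ∑ d ∈ (Finset.Icc 1 ⌊Δ⌋₊).filter Squarefree,
      hfun g d * Real.log (Δ / d))
    (y : ℕ → ℝ)
    (hy : ∀ d : ℕ, y d =
      if Squarefree d ∧ (d : ℝ) ≤ Δ then H⁻¹ * Real.log (Δ / d) else 0)
    (ρ : ℕ → ℝ)
    (hρ : ∀ ℓ : ℕ, Squarefree ℓ → (ℓ : ℝ) ≤ Δ →
      ρ ℓ = ((ArithmeticFunction.moebius ℓ : ℤ) : ℝ) / g ℓ *
        ∑ d ∈ (Finset.Icc 1 ⌊Δ⌋₊).filter (fun d => Squarefree d ∧ ℓ ∣ d),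
          g d * y d) :
    ∀ ℓ : ℕ, Squarefree ℓ → (ℓ : ℝ) ≤ Δ → |ρ ℓ| ≤ 1 := by
  intro ℓ hℓsf hℓΔ
  have hΔ0 : (0:ℝ) < Δ := by linarith
  have hℓ0 : 0 < ℓ := Nat.pos_of_ne_zero hℓsf.ne_zero
  have hple : ∀ d : ℕ, 0 < d → (d:ℝ) ≤ Δ → ∀ p ∈ d.primeFactors, 0 < g p ∧ g p < 1 := by
    intro d hd hdΔ p hp
    have hpp := Nat.prime_of_mem_primeFactors hp
    have hpd : p ∣ d := Nat.dvd_of_mem_primeFactors hp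
    have hcast : (p:ℝ) ≤ (d:ℝ) := Nat.cast_le.mpr (Nat.le_of_dvd hd hpd)
    exact hgp p hpp (hcast.trans hdΔ)
  have hgpos : ∀ d : ℕ, Squarefree d → (d:ℝ) ≤ Δ → 0 < g d := by
    intro d hsf hdΔ
    rw [gfun_prod g hg1 hgmult hsf]
    exact Finset.prod_pos fun p hp => (hple d hsf.ne_zero.bot_lt hdΔ p hp).1
  have hhpos : ∀ d : ℕ, Squarefree d → (d:ℝ) ≤ Δ → 0 < hfun g d := by
    intro d hsf hdΔ
    rw [hfun, if_pos hsf]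
    refine Finset.prod_pos fun p hp => ?_
    have h := hple d hsf.ne_zero.bot_lt hdΔ p hp
    exact div_pos h.1 (by linarith [h.2])
  have hgleh : ∀ d : ℕ, Squarefree d → (d:ℝ) ≤ Δ → g d ≤ hfun g d := by
    intro d hsf hdΔ
    rw [hfun, if_pos hsf, gfun_prod g hg1 hgmult hsf]
    refine Finset.prod_le_prod (fun p hp => (hple d hsf.ne_zero.bot_lt hdΔ p hp).1.le) ?_
    intro p hp
    have h := hple d hsf.ne_zero.bot_lt hdΔ p hp
    rw [le_div_iff₀ (by linarith [h.2])]
    nlinarith [h.1, h.2]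
  have hmemA : ∀ d : ℕ, d ∈ Finset.Icc 1 ⌊Δ⌋₊ → 0 < d ∧ (d:ℝ) ≤ Δ := by
    intro d hd
    rw [Finset.mem_Icc] at hd
    exact ⟨hd.1, (Nat.le_floor_iff hΔ0.le).mp hd.2⟩
  have hlog : ∀ d : ℕ, 0 < d → (d:ℝ) ≤ Δ → 0 ≤ Real.log (Δ / d) := by
    intro d hd hdΔ
    apply Real.log_nonneg
    rw [le_div_iff₀ (by exact_mod_cast hd)]
    simpa using hdΔ
  have hHpos : 0 < H := by
    rw [hH]
    apply Finset.sum_pos'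
    · intro d hd
      rw [Finset.mem_filter] at hd
      have h := hmemA d hd.1
      exact mul_nonneg (hhpos d hd.2 h.2).le (hlog d h.1 h.2)
    · refine ⟨1, ?_, ?_⟩
      · rw [Finset.mem_filter, Finset.mem_Icc]
        exact ⟨⟨le_refl 1, Nat.le_floor (by push_cast; linarith)⟩, squarefree_one⟩
      · have h1 : hfun g 1 = 1 := by rw [hfun, if_pos squarefree_one]; simp
        rw [h1, Nat.cast_one, div_one, one_mul]
        exact Real.log_pos (by linarith)
  rw [hρ ℓ hℓsf hℓΔ]
  set B := (Finset.Icc 1 ⌊Δ⌋₊).filter (fun d => Squarefree d ∧ ℓ ∣ d) with hB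
  set A := (Finset.Icc 1 ⌊Δ⌋₊).filter Squarefree with hA
  have hBfacts : ∀ d ∈ B, 0 < d ∧ (d:ℝ) ≤ Δ ∧ Squarefree d ∧ ℓ ∣ d := by
    intro d hd
    rw [hB, Finset.mem_filter] at hd
    have h := hmemA d hd.1
    exact ⟨h.1, h.2, hd.2.1, hd.2.2⟩
  have hsum : ∑ d ∈ B, g d * y d
      = H⁻¹ * (g ℓ * ∑ d ∈ B, g (d / ℓ) * Real.log (Δ / d)) := by
    rw [Finset.mul_sum, Finset.mul_sum]
    refine Finset.sum_congr rfl fun d hd => ?_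
    obtain ⟨hd0, hdΔ, hdsf, hdvd⟩ := hBfacts d hd
    have hy' : y d = H⁻¹ * Real.log (Δ / d) := by rw [hy d, if_pos ⟨hdsf, hdΔ⟩]
    have hco : Nat.Coprime ℓ (d / ℓ) := by
      have heq : ℓ * (d / ℓ) = d := Nat.mul_div_cancel' hdvd
      have hsf2 : Squarefree (ℓ * (d / ℓ)) := by rw [heq]; exact hdsf
      exact (Nat.squarefree_mul_iff.mp hsf2).1
    have hgd : g d = g ℓ * g (d / ℓ) := by
      conv_lhs => rw [← Nat.mul_div_cancel' hdvd]
      exact hgmult ℓ (d / ℓ) hco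
    rw [hy', hgd]; ring
  set T := ∑ d ∈ B, g (d / ℓ) * Real.log (Δ / d) with hT
  have hTnonneg : 0 ≤ T := by
    refine Finset.sum_nonneg fun d hd => ?_
    obtain ⟨hd0, hdΔ, hdsf, hdvd⟩ := hBfacts d hd
    have hmsf : Squarefree (d / ℓ) := hdsf.squarefree_of_dvd (Nat.div_dvd_of_dvd hdvd)
    have hm_le : ((d / ℓ : ℕ):ℝ) ≤ Δ :=
      le_trans (Nat.cast_le.mpr (Nat.le_of_dvd hd0 (Nat.div_dvd_of_dvd hdvd))) hdΔ
    exact mul_nonneg (hgpos _ hmsf hm_le).le (hlog d hd0 hdΔ)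
  have hTleH : T ≤ H := by
    have step1 : T ≤ ∑ d ∈ B, hfun g (d / ℓ) * Real.log (Δ / ((d / ℓ : ℕ):ℝ)) := by
      refine Finset.sum_le_sum fun d hd => ?_
      obtain ⟨hd0, hdΔ, hdsf, hdvd⟩ := hBfacts d hd
      have hmdvd : d / ℓ ∣ d := Nat.div_dvd_of_dvd hdvd
      have hm0 : 0 < d / ℓ := Nat.div_pos (Nat.le_of_dvd hd0 hdvd) hℓ0
      have hmd : d / ℓ ≤ d := Nat.le_of_dvd hd0 hmdvd
      have hmsf : Squarefree (d / ℓ) := hdsf.squarefree_of_dvd hmdvd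
      have hmΔ : ((d / ℓ : ℕ):ℝ) ≤ Δ := le_trans (Nat.cast_le.mpr hmd) hdΔ
      refine mul_le_mul (hgleh _ hmsf hmΔ) ?_ (hlog d hd0 hdΔ) (hhpos _ hmsf hmΔ).le
      apply Real.log_le_log (div_pos hΔ0 (Nat.cast_pos.mpr hd0))
      exact div_le_div_of_nonneg_left hΔ0.le (Nat.cast_pos.mpr hm0) (Nat.cast_le.mpr hmd)
    have step2 : ∑ d ∈ B, hfun g (d / ℓ) * Real.log (Δ / ((d / ℓ : ℕ):ℝ))
        = ∑ m ∈ B.image (· / ℓ), hfun g m * Real.log (Δ / m) := by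
      have hinj : ∀ a ∈ B, ∀ b ∈ B, a / ℓ = b / ℓ → a = b := by
        intro a ha b hb hab
        have haa := (hBfacts a ha).2.2.2
        have hbb := (hBfacts b hb).2.2.2
        have h := congrArg (ℓ * ·) hab
        simpa [Nat.mul_div_cancel' haa, Nat.mul_div_cancel' hbb] using h
      exact (Finset.sum_image (f := fun m => hfun g m * Real.log (Δ / (m:ℝ))) hinj).symm
    have hsub : B.image (· / ℓ) ⊆ A := by
      intro m hm
      rw [Finset.mem_image] at hm
      obtain ⟨d, hd, rfl⟩ := hm
      obtain ⟨hd0, hdΔ, hdsf, hdvd⟩ := hBfacts d hd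
      have hdD : d ≤ ⌊Δ⌋₊ := (Finset.mem_Icc.mp (Finset.mem_filter.mp hd).1).2
      rw [hA, Finset.mem_filter, Finset.mem_Icc]
      exact ⟨⟨Nat.div_pos (Nat.le_of_dvd hd0 hdvd) hℓ0, le_trans (Nat.div_le_self d ℓ) hdD⟩,
        hdsf.squarefree_of_dvd (Nat.div_dvd_of_dvd hdvd)⟩
    have step3 : ∑ m ∈ B.image (· / ℓ), hfun g m * Real.log (Δ / m)
        ≤ ∑ m ∈ A, hfun g m * Real.log (Δ / m) := by
      apply Finset.sum_le_sum_of_subset_of_nonneg hsub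
      intro m hmA _
      rw [hA, Finset.mem_filter] at hmA
      have h := hmemA m hmA.1
      exact mul_nonneg (hhpos m hmA.2 h.2).le (hlog m h.1 h.2)
    rw [hH]
    calc T ≤ _ := step1
      _ = _ := step2
      _ ≤ _ := step3
  have hgℓ : 0 < g ℓ := hgpos ℓ hℓsf hℓΔ
  have habsμ : |((ArithmeticFunction.moebius ℓ : ℤ) : ℝ)| = 1 := by
    have h := ArithmeticFunction.abs_moebius_eq_one_of_squarefree hℓsf
    rw [← Int.cast_abs, h, Int.cast_one]
  rw [hsum, abs_mul, abs_div, habsμ, abs_of_pos hgℓ,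
    abs_of_nonneg (mul_nonneg (inv_nonneg.mpr hHpos.le) (mul_nonneg hgℓ.le hTnonneg))]
  have hkey : 1 / g ℓ * (H⁻¹ * (g ℓ * T)) = T / H := by
    field_simp
  rw [hkey, div_le_one hHpos]
  exact hTleH
end

section
/- Let z > w ≥ 2 and Δ ≥ w³, and assume Assumption 1: G(w) ≤ (3/2)(log w)², and Assumption 2: J(w,Δ)(log Δ)² ≤ 3 K(w²,Δ). Then H² W ≥ ν K(Δ), where ν = 1 − Σ_{w < p ≤ z, p prime} g(p) − (9/2) α² and α = (log w)/(log Δ). -/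
open Finset

/-- `K(u) = Σ_{d ≤ u, d squarefree} h(d) (log(Δ/d))²`. -/
noncomputable def Kfun (g : ℕ → ℝ) (Δ u : ℝ) : ℝ :=
  ∑ d ∈ (Finset.Icc 1 ⌊u⌋₊).filter Squarefree,
    hfun g d * (Real.log (Δ / d)) ^ 2

set_option maxHeartbeats 1000000 in
/-- Under Assumptions 1 and 2, for `z > w ≥ 2` and `Δ ≥ w³` one has
`H² W ≥ ν K(Δ)` where `ν = 1 − Σ_{w<p≤z} g(p) − (9/2) α²`, `α = log w / log Δ`. -/
theorem HsqW_ge_nu_K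
    (Δ w z : ℝ) (hw : 2 ≤ w) (hwz : w < z) (hΔ : w ^ 3 ≤ Δ)
    (g : ℕ → ℝ) (hg1 : g 1 = 1)
    (hgmult : ∀ m n : ℕ, Nat.Coprime m n → g (m * n) = g m * g n)
    (hgp : ∀ p : ℕ, p.Prime → 0 ≤ g p ∧ g p < 1)
    (H : ℝ)
    (hH : H = ∑ d ∈ (Finset.Icc 1 ⌊Δ⌋₊).filter Squarefree,
      hfun g d * Real.log (Δ / d))
    (y : ℕ → ℝ)
    (hy : ∀ d : ℕ, y d =
      if Squarefree d ∧ (d : ℝ) ≤ Δ then H⁻¹ * Real.log (Δ / d) else 0)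
    (W : ℝ)
    (hW : W = (∑ d ∈ (Finset.Icc 1 ⌊Δ⌋₊).filter Squarefree, hfun g d * y d ^ 2)
      - ∑ p ∈ (Finset.range ⌈z⌉₊).filter (fun p : ℕ => p.Prime ∧ (p : ℝ) < z),
          g p * ∑ d ∈ (Finset.Icc 1 ⌊Δ⌋₊).filter (fun d => Squarefree d ∧ ¬ p ∣ d),
            hfun g d * (y d - y (p * d)) ^ 2)
    -- Assumption 1: `G(w) ≤ (3/2)(log w)²`
    (hA1 : ∑ p ∈ (Finset.range (⌊w⌋₊ + 1)).filter Nat.Prime,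
      g p * (Real.log p) ^ 2 ≤ 3 / 2 * (Real.log w) ^ 2)
    -- Assumption 2: `J(w,Δ)(log Δ)² ≤ 3 K(w²,Δ)`
    (hA2 : (∑ d ∈ (Finset.Icc 1 ⌊Δ⌋₊).filter
        (fun d : ℕ => Squarefree d ∧ w < (d : ℝ)), hfun g d) * (Real.log Δ) ^ 2
      ≤ 3 * (Kfun g Δ Δ - Kfun g Δ (w ^ 2))) :
    H ^ 2 * W ≥
      (1 - (∑ p ∈ (Finset.range (⌊z⌋₊ + 1)).filter
          (fun p : ℕ => p.Prime ∧ w < (p : ℝ) ∧ (p : ℝ) ≤ z), g p)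
        - 9 / 2 * (Real.log w / Real.log Δ) ^ 2) * Kfun g Δ Δ := by
  classical
  have hw0 : (0:ℝ) < w := by linarith
  have hΔ8 : (8:ℝ) ≤ Δ := by nlinarith
  have hΔ0 : (0:ℝ) < Δ := by linarith
  have hΔ1 : (1:ℝ) < Δ := by linarith
  set L := Real.log Δ with hLdef
  have hL0 : 0 < L := Real.log_pos hΔ1
  have hlw0 : 0 < Real.log w := Real.log_pos (by linarith)
  have h3lw : 3 * Real.log w ≤ L := by
    have h1 : Real.log (w ^ 3) ≤ L := Real.log_le_log (by positivity) hΔ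
    rw [Real.log_pow] at h1
    push_cast at h1
    linarith
  have hh : ∀ d : ℕ, 0 ≤ hfun g d := by
    intro d
    unfold hfun
    split
    · apply Finset.prod_nonneg
      intro p hp
      have hp' := Nat.prime_of_mem_primeFactors hp
      obtain ⟨h0, h1⟩ := hgp p hp'
      have : 0 < 1 - g p := by linarith
      positivity
    · exact le_refl 0
  have hfun1 : hfun g 1 = 1 := by simp [hfun]
  set D := (Finset.Icc 1 ⌊Δ⌋₊).filter Squarefree with hD
  have hmem : ∀ d ∈ D, 1 ≤ d ∧ (d : ℝ) ≤ Δ ∧ Squarefree d := by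
    intro d hd
    rw [hD, Finset.mem_filter, Finset.mem_Icc] at hd
    exact ⟨hd.1.1, (Nat.le_floor_iff hΔ0.le).mp hd.1.2, hd.2⟩
  -- log(Δ/d) bounds
  have hlog1 : ∀ d : ℕ, 1 ≤ d → (d : ℝ) ≤ Δ → 0 ≤ Real.log (Δ / d) := by
    intro d h1 h2
    have hd0 : (0:ℝ) < d := by exact_mod_cast h1
    exact Real.log_nonneg ((one_le_div hd0).mpr h2)
  -- H is positive
  have hH0 : 0 < H := by
    rw [hH]
    have h1D : 1 ∈ D := by
      rw [hD, Finset.mem_filter, Finset.mem_Icc]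
      refine ⟨⟨le_refl 1, ?_⟩, squarefree_one⟩
      exact Nat.le_floor (by push_cast; linarith)
    have hterm : hfun g 1 * Real.log (Δ / (1:ℕ)) = L := by
      rw [hfun1]; push_cast; rw [div_one]; ring
    calc (0:ℝ) < L := hL0
      _ = hfun g 1 * Real.log (Δ / (1:ℕ)) := hterm.symm
      _ ≤ ∑ d ∈ D, hfun g d * Real.log (Δ / d) := by
          apply Finset.single_le_sum (f := fun d : ℕ => hfun g d * Real.log (Δ / (d:ℝ))) _ h1D
          intro d hd
          obtain ⟨h1, h2, _⟩ := hmem d hd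
          exact mul_nonneg (hh d) (hlog1 d h1 h2)
  have hHne : H ≠ 0 := ne_of_gt hH0
  set P := (Finset.range ⌈z⌉₊).filter (fun p : ℕ => p.Prime ∧ (p : ℝ) < z) with hP
  set B : ℕ → ℝ := fun p => ∑ d ∈ D.filter (fun d => ¬ p ∣ d),
      hfun g d * (if (p:ℝ) * (d:ℝ) ≤ Δ then (Real.log p) ^ 2
        else (Real.log (Δ / d)) ^ 2) with hB
  set K := Kfun g Δ Δ with hKdef
  set Kw2 := Kfun g Δ (w ^ 2) with hKw2def
  set J := ∑ d ∈ (Finset.Icc 1 ⌊Δ⌋₊).filter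
      (fun d : ℕ => Squarefree d ∧ w < (d : ℝ)), hfun g d with hJ
  have hKD : K = ∑ d ∈ D, hfun g d * (Real.log (Δ / d)) ^ 2 := by
    rw [hKdef, hD]; rfl
  have hKnn : 0 ≤ K := by
    rw [hKD]
    exact Finset.sum_nonneg fun d _ => mul_nonneg (hh d) (sq_nonneg _)
  have hKw2nn : 0 ≤ Kw2 := by
    rw [hKw2def]
    exact Finset.sum_nonneg fun d _ => mul_nonneg (hh d) (sq_nonneg _)
  have hJnn : 0 ≤ J := by
    rw [hJ]
    exact Finset.sum_nonneg fun d _ => hh d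
  -- the key rewrite: H² W = K - Σ_p g(p) B(p)
  have hterm1 : ∀ d ∈ D, H ^ 2 * (hfun g d * y d ^ 2)
      = hfun g d * (Real.log (Δ / d)) ^ 2 := by
    intro d hd
    obtain ⟨h1, h2, h3⟩ := hmem d hd
    have hyd : y d = H⁻¹ * Real.log (Δ / d) := by rw [hy d, if_pos ⟨h3, h2⟩]
    rw [hyd]
    field_simp
  have hterm2 : ∀ p : ℕ, p.Prime → ∀ d ∈ D, ¬ p ∣ d →
      H ^ 2 * (hfun g d * (y d - y (p * d)) ^ 2)
      = hfun g d * (if (p:ℝ) * (d:ℝ) ≤ Δ then (Real.log p) ^ 2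
          else (Real.log (Δ / d)) ^ 2) := by
    intro p hp d hd hnd
    obtain ⟨h1, h2, h3⟩ := hmem d hd
    have hd0 : (0:ℝ) < d := by exact_mod_cast h1
    have hp0 : (0:ℝ) < p := by exact_mod_cast hp.pos
    have hyd : y d = H⁻¹ * Real.log (Δ / d) := by rw [hy d, if_pos ⟨h3, h2⟩]
    have hpdsf : Squarefree (p * d) :=
      (Nat.squarefree_mul ((Nat.Prime.coprime_iff_not_dvd hp).mpr hnd)).mpr
        ⟨hp.squarefree, h3⟩
    by_cases hc : (p:ℝ) * (d:ℝ) ≤ Δ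
    · have hypd : y (p * d) = H⁻¹ * Real.log (Δ / ((p:ℝ) * (d:ℝ))) := by
        rw [hy (p * d), if_pos ⟨hpdsf, by push_cast; exact hc⟩]
        push_cast
        ring_nf
      have hlsplit : Real.log (Δ / d) = Real.log (Δ / ((p:ℝ) * (d:ℝ))) + Real.log p := by
        rw [Real.log_div hΔ0.ne' hd0.ne', Real.log_div hΔ0.ne' (by positivity),
          Real.log_mul hp0.ne' hd0.ne']
        ring
      rw [if_pos hc, hyd, hypd, hlsplit]
      field_simp
      ring
    · have hypd : y (p * d) = 0 := by
        rw [hy (p * d), if_neg]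
        rintro ⟨-, hle⟩
        push_cast at hle
        exact hc hle
      rw [if_neg hc, hyd, hypd]
      field_simp
      ring
  have hHW : H ^ 2 * W = K - ∑ p ∈ P, g p * B p := by
    rw [hW, mul_sub]
    congr 1
    · rw [hKD, Finset.mul_sum]
      exact Finset.sum_congr rfl hterm1
    · rw [Finset.mul_sum]
      apply Finset.sum_congr rfl
      intro p hp
      have hpprime : p.Prime := by
        rw [hP, Finset.mem_filter] at hp
        exact hp.2.1
      have hset : (Finset.Icc 1 ⌊Δ⌋₊).filter (fun d => Squarefree d ∧ ¬ p ∣ d)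
          = D.filter (fun d => ¬ p ∣ d) := by
        rw [hD, Finset.filter_filter]
      rw [hset, ← mul_assoc, mul_comm (H ^ 2) (g p), mul_assoc, hB]
      congr 1
      rw [Finset.mul_sum]
      apply Finset.sum_congr rfl
      intro d hd
      rw [Finset.mem_filter] at hd
      exact hterm2 p hpprime d hd.1 hd.2
  -- pointwise bound for large primes
  have hBK : ∀ p : ℕ, p.Prime → B p ≤ K := by
    intro p hp
    have hp1 : (1:ℝ) ≤ p := by exact_mod_cast hp.one_le
    rw [hB, hKD]
    calc ∑ d ∈ D.filter (fun d => ¬ p ∣ d),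
          hfun g d * (if (p:ℝ) * (d:ℝ) ≤ Δ then (Real.log p) ^ 2
            else (Real.log (Δ / d)) ^ 2)
        ≤ ∑ d ∈ D.filter (fun d => ¬ p ∣ d),
            hfun g d * (Real.log (Δ / d)) ^ 2 := by
          apply Finset.sum_le_sum
          intro d hd
          rw [Finset.mem_filter] at hd
          obtain ⟨h1, h2, h3⟩ := hmem d hd.1
          have hd0 : (0:ℝ) < d := by exact_mod_cast h1
          apply mul_le_mul_of_nonneg_left _ (hh d)
          split_ifs with hc
          · have hple : (p:ℝ) ≤ Δ / d := (le_div_iff₀ hd0).mpr hc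
            have hll : Real.log p ≤ Real.log (Δ / d) :=
              Real.log_le_log (by linarith) hple
            exact pow_le_pow_left₀ (Real.log_nonneg hp1) hll 2
          · exact le_refl _
      _ ≤ ∑ d ∈ D, hfun g d * (Real.log (Δ / d)) ^ 2 :=
          Finset.sum_le_sum_of_subset_of_nonneg (Finset.filter_subset _ _)
            (fun d _ _ => mul_nonneg (hh d) (sq_nonneg _))
  -- pointwise bound for small primes
  have hBw : ∀ p : ℕ, p.Prime → (p:ℝ) ≤ w →
      B p * L ^ 2 ≤ (Real.log p) ^ 2 * (9 / 4 * Kw2 + J * L ^ 2) := by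
    intro p hp hpw
    have hp1 : (1:ℝ) ≤ p := by exact_mod_cast hp.one_le
    have hlp0 : 0 ≤ Real.log p := Real.log_nonneg hp1
    have hw2Δ : w * w ≤ Δ := by nlinarith
    have hsplit2 := Finset.sum_filter_add_sum_filter_not (D.filter (fun d => ¬ p ∣ d))
        (fun d : ℕ => (d:ℝ) ≤ w)
        (fun d => hfun g d * (if (p:ℝ) * (d:ℝ) ≤ Δ then (Real.log p) ^ 2
          else (Real.log (Δ / d)) ^ 2))
    have hpart1 : (∑ d ∈ (D.filter (fun d => ¬ p ∣ d)).filter (fun d : ℕ => (d:ℝ) ≤ w),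
        hfun g d * (if (p:ℝ) * (d:ℝ) ≤ Δ then (Real.log p) ^ 2
          else (Real.log (Δ / d)) ^ 2)) * L ^ 2
        ≤ (Real.log p) ^ 2 * (9 / 4 * Kw2) := by
      rw [Finset.sum_mul]
      calc ∑ d ∈ (D.filter (fun d => ¬ p ∣ d)).filter (fun d : ℕ => (d:ℝ) ≤ w),
            hfun g d * (if (p:ℝ) * (d:ℝ) ≤ Δ then (Real.log p) ^ 2
              else (Real.log (Δ / d)) ^ 2) * L ^ 2
          ≤ ∑ d ∈ (D.filter (fun d => ¬ p ∣ d)).filter (fun d : ℕ => (d:ℝ) ≤ w),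
              (Real.log p) ^ 2 * (9 / 4 * (hfun g d * (Real.log (Δ / d)) ^ 2)) := by
            apply Finset.sum_le_sum
            intro d hd
            rw [Finset.mem_filter] at hd
            obtain ⟨hdD, hdw⟩ := hd
            rw [Finset.mem_filter] at hdD
            obtain ⟨h1, h2, h3⟩ := hmem d hdD.1
            have hd0 : (0:ℝ) < d := by exact_mod_cast h1
            have hc : (p:ℝ) * (d:ℝ) ≤ Δ := by
              have := mul_le_mul hpw hdw hd0.le hw0.le
              linarith
            rw [if_pos hc]
            have hld : Real.log d ≤ Real.log w := Real.log_le_log hd0 hdw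
            have hlogD : Real.log (Δ / d) = L - Real.log d := by
              rw [Real.log_div hΔ0.ne' hd0.ne']
            have hld0 : 0 ≤ Real.log d := Real.log_nonneg (by exact_mod_cast h1)
            have hx : 2 / 3 * L ≤ Real.log (Δ / d) := by rw [hlogD]; linarith
            have hx0 : 0 ≤ Real.log (Δ / d) := by linarith
            have hL2 : L ^ 2 ≤ 9 / 4 * (Real.log (Δ / d)) ^ 2 := by
              nlinarith [hx, hL0.le]
            have hA : 0 ≤ hfun g d * (Real.log p) ^ 2 :=
              mul_nonneg (hh d) (sq_nonneg _)
            linarith [mul_le_mul_of_nonneg_left hL2 hA]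
        _ = (Real.log p) ^ 2 * (9 / 4 *
              ∑ d ∈ (D.filter (fun d => ¬ p ∣ d)).filter (fun d : ℕ => (d:ℝ) ≤ w),
                hfun g d * (Real.log (Δ / d)) ^ 2) := by
            rw [Finset.mul_sum, Finset.mul_sum]
        _ ≤ (Real.log p) ^ 2 * (9 / 4 * Kw2) := by
            apply mul_le_mul_of_nonneg_left _ (sq_nonneg _)
            apply mul_le_mul_of_nonneg_left _ (by norm_num : (0:ℝ) ≤ 9/4)
            rw [hKw2def]
            show _ ≤ ∑ d ∈ (Finset.Icc 1 ⌊w ^ 2⌋₊).filter Squarefree,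
              hfun g d * (Real.log (Δ / d)) ^ 2
            apply Finset.sum_le_sum_of_subset_of_nonneg
            · intro d hd
              rw [Finset.mem_filter] at hd
              obtain ⟨hdD, hdw⟩ := hd
              rw [Finset.mem_filter] at hdD
              obtain ⟨h1, h2, h3⟩ := hmem d hdD.1
              rw [Finset.mem_filter, Finset.mem_Icc]
              refine ⟨⟨h1, Nat.le_floor ?_⟩, h3⟩
              nlinarith
            · exact fun d _ _ => mul_nonneg (hh d) (sq_nonneg _)
    have hpart2 : (∑ d ∈ (D.filter (fun d => ¬ p ∣ d)).filter
          (fun d : ℕ => ¬ (d:ℝ) ≤ w),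
        hfun g d * (if (p:ℝ) * (d:ℝ) ≤ Δ then (Real.log p) ^ 2
          else (Real.log (Δ / d)) ^ 2)) * L ^ 2
        ≤ (Real.log p) ^ 2 * (J * L ^ 2) := by
      have hS2 : ∑ d ∈ (D.filter (fun d => ¬ p ∣ d)).filter
            (fun d : ℕ => ¬ (d:ℝ) ≤ w),
          hfun g d * (if (p:ℝ) * (d:ℝ) ≤ Δ then (Real.log p) ^ 2
            else (Real.log (Δ / d)) ^ 2)
          ≤ (Real.log p) ^ 2 * J := by
        calc ∑ d ∈ (D.filter (fun d => ¬ p ∣ d)).filter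
              (fun d : ℕ => ¬ (d:ℝ) ≤ w),
            hfun g d * (if (p:ℝ) * (d:ℝ) ≤ Δ then (Real.log p) ^ 2
              else (Real.log (Δ / d)) ^ 2)
            ≤ ∑ d ∈ (D.filter (fun d => ¬ p ∣ d)).filter
                (fun d : ℕ => ¬ (d:ℝ) ≤ w), hfun g d * (Real.log p) ^ 2 := by
              apply Finset.sum_le_sum
              intro d hd
              rw [Finset.mem_filter] at hd
              obtain ⟨hdD, hdw⟩ := hd
              rw [Finset.mem_filter] at hdD
              obtain ⟨h1, h2, h3⟩ := hmem d hdD.1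
              have hd0 : (0:ℝ) < d := by exact_mod_cast h1
              apply mul_le_mul_of_nonneg_left _ (hh d)
              split_ifs with hc
              · exact le_refl _
              · push_neg at hc
                have hdiv : Δ / d ≤ (p:ℝ) := by
                  rw [div_le_iff₀ hd0]; nlinarith
                have hx0 : 0 ≤ Real.log (Δ / d) := hlog1 d h1 h2
                have hll : Real.log (Δ / d) ≤ Real.log p :=
                  Real.log_le_log (by positivity) hdiv
                exact pow_le_pow_left₀ hx0 hll 2
          _ = (∑ d ∈ (D.filter (fun d => ¬ p ∣ d)).filter
                (fun d : ℕ => ¬ (d:ℝ) ≤ w), hfun g d) * (Real.log p) ^ 2 := by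
              rw [Finset.sum_mul]
          _ ≤ J * (Real.log p) ^ 2 := by
              apply mul_le_mul_of_nonneg_right _ (sq_nonneg _)
              rw [hJ]
              apply Finset.sum_le_sum_of_subset_of_nonneg
              · intro d hd
                rw [Finset.mem_filter] at hd
                obtain ⟨hdD, hdw⟩ := hd
                rw [Finset.mem_filter] at hdD
                have hdIcc : d ∈ Finset.Icc 1 ⌊Δ⌋₊ := by
                  have := hdD.1
                  rw [hD, Finset.mem_filter] at this
                  exact this.1
                rw [Finset.mem_filter]
                exact ⟨hdIcc, (hmem d hdD.1).2.2, not_le.mp hdw⟩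
              · exact fun d _ _ => hh d
          _ = (Real.log p) ^ 2 * J := by ring
      calc (∑ d ∈ (D.filter (fun d => ¬ p ∣ d)).filter
            (fun d : ℕ => ¬ (d:ℝ) ≤ w),
          hfun g d * (if (p:ℝ) * (d:ℝ) ≤ Δ then (Real.log p) ^ 2
            else (Real.log (Δ / d)) ^ 2)) * L ^ 2
          ≤ ((Real.log p) ^ 2 * J) * L ^ 2 :=
            mul_le_mul_of_nonneg_right hS2 (sq_nonneg _)
        _ = (Real.log p) ^ 2 * (J * L ^ 2) := by ring
    rw [hB]
    calc (∑ d ∈ D.filter (fun d => ¬ p ∣ d),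
          hfun g d * (if (p:ℝ) * (d:ℝ) ≤ Δ then (Real.log p) ^ 2
            else (Real.log (Δ / d)) ^ 2)) * L ^ 2
        = (∑ d ∈ (D.filter (fun d => ¬ p ∣ d)).filter (fun d : ℕ => (d:ℝ) ≤ w),
            hfun g d * (if (p:ℝ) * (d:ℝ) ≤ Δ then (Real.log p) ^ 2
              else (Real.log (Δ / d)) ^ 2)) * L ^ 2
          + (∑ d ∈ (D.filter (fun d => ¬ p ∣ d)).filter
              (fun d : ℕ => ¬ (d:ℝ) ≤ w),
            hfun g d * (if (p:ℝ) * (d:ℝ) ≤ Δ then (Real.log p) ^ 2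
              else (Real.log (Δ / d)) ^ 2)) * L ^ 2 := by
          rw [← add_mul, hsplit2]
      _ ≤ (Real.log p) ^ 2 * (9 / 4 * Kw2) + (Real.log p) ^ 2 * (J * L ^ 2) :=
          add_le_add hpart1 hpart2
      _ = (Real.log p) ^ 2 * (9 / 4 * Kw2 + J * L ^ 2) := by ring
  -- sum bounds
  have hB0 : ∀ p : ℕ, 0 ≤ B p := by
    intro p
    rw [hB]
    apply Finset.sum_nonneg
    intro d _
    apply mul_nonneg (hh d)
    split <;> exact sq_nonneg _
  have hsplit := Finset.sum_filter_add_sum_filter_not P (fun p : ℕ => (p:ℝ) ≤ w)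
      (fun p => g p * B p)
  have hgP : ∀ p ∈ P, 0 ≤ g p := by
    intro p hp
    rw [hP, Finset.mem_filter] at hp
    exact (hgp p hp.2.1).1
  -- small prime part
  have hSmall : ∑ p ∈ P.filter (fun p : ℕ => (p:ℝ) ≤ w), g p * B p
      ≤ 9 / 2 * (Real.log w / L) ^ 2 * K := by
    have hmemP1 : ∀ p ∈ P.filter (fun p : ℕ => (p:ℝ) ≤ w), p.Prime ∧ (p:ℝ) ≤ w := by
      intro p hp
      rw [Finset.mem_filter] at hp
      have h1 := hp.1
      rw [hP, Finset.mem_filter] at h1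
      exact ⟨h1.2.1, hp.2⟩
    have hC0 : (0:ℝ) ≤ 9 / 4 * Kw2 + J * L ^ 2 :=
      add_nonneg (by positivity) (mul_nonneg hJnn (sq_nonneg _))
    have hXL : (∑ p ∈ P.filter (fun p : ℕ => (p:ℝ) ≤ w), g p * B p) * L ^ 2
        ≤ 9 / 2 * (Real.log w) ^ 2 * K := by
      calc (∑ p ∈ P.filter (fun p : ℕ => (p:ℝ) ≤ w), g p * B p) * L ^ 2
          = ∑ p ∈ P.filter (fun p : ℕ => (p:ℝ) ≤ w), g p * B p * L ^ 2 :=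
            Finset.sum_mul _ _ _
        _ ≤ ∑ p ∈ P.filter (fun p : ℕ => (p:ℝ) ≤ w),
              g p * (Real.log p) ^ 2 * (9 / 4 * Kw2 + J * L ^ 2) := by
            apply Finset.sum_le_sum
            intro p hp
            obtain ⟨hpp, hpw⟩ := hmemP1 p hp
            have hb := hBw p hpp hpw
            have hg0 := (hgp p hpp).1
            calc g p * B p * L ^ 2 = g p * (B p * L ^ 2) := by ring
              _ ≤ g p * ((Real.log p) ^ 2 * (9 / 4 * Kw2 + J * L ^ 2)) :=
                  mul_le_mul_of_nonneg_left hb hg0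
              _ = g p * (Real.log p) ^ 2 * (9 / 4 * Kw2 + J * L ^ 2) := by ring
        _ = (∑ p ∈ P.filter (fun p : ℕ => (p:ℝ) ≤ w), g p * (Real.log p) ^ 2)
              * (9 / 4 * Kw2 + J * L ^ 2) := (Finset.sum_mul _ _ _).symm
        _ ≤ (3 / 2 * (Real.log w) ^ 2) * (9 / 4 * Kw2 + J * L ^ 2) := by
            apply mul_le_mul_of_nonneg_right _ hC0
            calc ∑ p ∈ P.filter (fun p : ℕ => (p:ℝ) ≤ w), g p * (Real.log p) ^ 2
                ≤ ∑ p ∈ (Finset.range (⌊w⌋₊ + 1)).filter Nat.Prime,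
                    g p * (Real.log p) ^ 2 := by
                  apply Finset.sum_le_sum_of_subset_of_nonneg
                  · intro p hp
                    obtain ⟨hpp, hpw⟩ := hmemP1 p hp
                    rw [Finset.mem_filter, Finset.mem_range]
                    exact ⟨Nat.lt_succ_of_le (Nat.le_floor hpw), hpp⟩
                  · intro p hp _
                    rw [Finset.mem_filter] at hp
                    exact mul_nonneg (hgp p hp.2).1 (sq_nonneg _)
              _ ≤ 3 / 2 * (Real.log w) ^ 2 := hA1
        _ ≤ 9 / 2 * (Real.log w) ^ 2 * K := by
            have hmul := mul_le_mul_of_nonneg_left hA2 (sq_nonneg (Real.log w))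
            have hKw2' : 0 ≤ (Real.log w) ^ 2 * Kw2 :=
              mul_nonneg (sq_nonneg _) hKw2nn
            nlinarith [hmul, hKw2']
    have hL2pos : (0:ℝ) < L ^ 2 := by positivity
    apply le_of_mul_le_mul_right _ hL2pos
    have heq : 9 / 2 * (Real.log w / L) ^ 2 * K * L ^ 2
        = 9 / 2 * (Real.log w) ^ 2 * K := by
      field_simp
    rw [heq]
    exact hXL
  -- large prime part
  have hLarge : ∑ p ∈ P.filter (fun p : ℕ => ¬ (p:ℝ) ≤ w), g p * B p
      ≤ (∑ p ∈ (Finset.range (⌊z⌋₊ + 1)).filter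
          (fun p : ℕ => p.Prime ∧ w < (p : ℝ) ∧ (p : ℝ) ≤ z), g p) * K := by
    have hmemP2 : ∀ p ∈ P.filter (fun p : ℕ => ¬ (p:ℝ) ≤ w),
        p.Prime ∧ w < (p:ℝ) ∧ (p:ℝ) < z := by
      intro p hp
      rw [Finset.mem_filter] at hp
      have h1 := hp.1
      rw [hP, Finset.mem_filter] at h1
      exact ⟨h1.2.1, not_le.mp hp.2, h1.2.2⟩
    calc ∑ p ∈ P.filter (fun p : ℕ => ¬ (p:ℝ) ≤ w), g p * B p
        ≤ ∑ p ∈ P.filter (fun p : ℕ => ¬ (p:ℝ) ≤ w), g p * K := by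
          apply Finset.sum_le_sum
          intro p hp
          obtain ⟨hpp, -, -⟩ := hmemP2 p hp
          exact mul_le_mul_of_nonneg_left (hBK p hpp) (hgp p hpp).1
      _ = (∑ p ∈ P.filter (fun p : ℕ => ¬ (p:ℝ) ≤ w), g p) * K :=
          (Finset.sum_mul _ _ _).symm
      _ ≤ (∑ p ∈ (Finset.range (⌊z⌋₊ + 1)).filter
            (fun p : ℕ => p.Prime ∧ w < (p : ℝ) ∧ (p : ℝ) ≤ z), g p) * K := by
          apply mul_le_mul_of_nonneg_right _ hKnn
          apply Finset.sum_le_sum_of_subset_of_nonneg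
          · intro p hp
            obtain ⟨hpp, hw', hz'⟩ := hmemP2 p hp
            rw [Finset.mem_filter, Finset.mem_range]
            exact ⟨Nat.lt_succ_of_le (Nat.le_floor hz'.le), hpp, hw', hz'.le⟩
          · intro p hp _
            rw [Finset.mem_filter] at hp
            exact (hgp p hp.2.1).1
  rw [ge_iff_le, hHW]
  linarith [hSmall, hLarge, hsplit]
end

section
/- (Theorem 3.1) Let z > w ≥ 2 and Δ ≥ w³, assume Assumption 1: G(w) ≤ (3/2)(log w)², Assumption 2: J(w,Δ)(log Δ)² ≤ 3 K(w²,Δ), and suppose ν = 1 − Σ_{w < p ≤ z, p prime} g(p) − (9/2) α² > 0, where α = (log w)/(log Δ). Then J W ≥ ν, where J = Σ_{d ≤ Δ, d squarefree} h(d). -/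
open Finset

set_option maxHeartbeats 2000000 in
/-- **Theorem 3.1.** Under Assumptions 1 and 2, if `z > w ≥ 2`, `Δ ≥ w³` and
`ν = 1 − Σ_{w<p≤z} g(p) − (9/2) α² > 0` with `α = log w / log Δ`, then `J W ≥ ν`
where `J = Σ_{d ≤ Δ, d squarefree} h(d)`. -/
theorem theorem_3_1
    (Δ w z : ℝ) (hw : 2 ≤ w) (hwz : w < z) (hΔ : w ^ 3 ≤ Δ)
    (g : ℕ → ℝ) (hg1 : g 1 = 1)
    (hgmult : ∀ m n : ℕ, Nat.Coprime m n → g (m * n) = g m * g n)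
    (hgp : ∀ p : ℕ, p.Prime → 0 ≤ g p ∧ g p < 1)
    (H : ℝ)
    (hH : H = ∑ d ∈ (Finset.Icc 1 ⌊Δ⌋₊).filter Squarefree,
      hfun g d * Real.log (Δ / d))
    (y : ℕ → ℝ)
    (hy : ∀ d : ℕ, y d =
      if Squarefree d ∧ (d : ℝ) ≤ Δ then H⁻¹ * Real.log (Δ / d) else 0)
    (W : ℝ)
    (hW : W = (∑ d ∈ (Finset.Icc 1 ⌊Δ⌋₊).filter Squarefree, hfun g d * y d ^ 2)
      - ∑ p ∈ (Finset.range ⌈z⌉₊).filter (fun p : ℕ => p.Prime ∧ (p : ℝ) < z),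
          g p * ∑ d ∈ (Finset.Icc 1 ⌊Δ⌋₊).filter (fun d => Squarefree d ∧ ¬ p ∣ d),
            hfun g d * (y d - y (p * d)) ^ 2)
    -- Assumption 1: `G(w) ≤ (3/2)(log w)²`
    (hA1 : ∑ p ∈ (Finset.range (⌊w⌋₊ + 1)).filter Nat.Prime,
      g p * (Real.log p) ^ 2 ≤ 3 / 2 * (Real.log w) ^ 2)
    -- Assumption 2: `J(w,Δ)(log Δ)² ≤ 3 K(w²,Δ)`
    (hA2 : (∑ d ∈ (Finset.Icc 1 ⌊Δ⌋₊).filter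
        (fun d : ℕ => Squarefree d ∧ w < (d : ℝ)), hfun g d) * (Real.log Δ) ^ 2
      ≤ 3 * (Kfun g Δ Δ - Kfun g Δ (w ^ 2)))
    -- `ν = 1 − Σ_{w<p≤z} g(p) − (9/2) α² > 0`
    (ν : ℝ)
    (hν : ν = 1 - (∑ p ∈ (Finset.range (⌊z⌋₊ + 1)).filter
          (fun p : ℕ => p.Prime ∧ w < (p : ℝ) ∧ (p : ℝ) ≤ z), g p)
        - 9 / 2 * (Real.log w / Real.log Δ) ^ 2)
    (hνpos : 0 < ν) :
    (∑ d ∈ (Finset.Icc 1 ⌊Δ⌋₊).filter Squarefree, hfun g d) * W ≥ ν := by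
  clear hgmult
  have hw1 : (1:ℝ) < w := by linarith
  have hw0 : (0:ℝ) < w := by linarith
  have hΔ8 : (8:ℝ) ≤ Δ := by
    nlinarith [pow_le_pow_left₀ (by norm_num : (0:ℝ) ≤ 2) hw 3]
  have hΔ1 : (1:ℝ) < Δ := by linarith
  have hΔ0 : (0:ℝ) < Δ := by linarith
  have hlw : 0 < Real.log w := Real.log_pos hw1
  have hlΔ : 0 < Real.log Δ := Real.log_pos hΔ1
  have h3 : 3 * Real.log w ≤ Real.log Δ := by
    have h1 := Real.log_le_log (by positivity : (0:ℝ) < w^3) hΔ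
    rw [show w^3 = w^(3:ℕ) by norm_num, Real.log_pow] at h1
    push_cast at h1; linarith
  -- nonnegativity of hfun
  have hh : ∀ d : ℕ, 0 ≤ hfun g d := by
    intro d
    unfold hfun
    split
    · exact Finset.prod_nonneg fun p hp =>
        div_nonneg (hgp p (Nat.prime_of_mem_primeFactors hp)).1
          (by linarith [(hgp p (Nat.prime_of_mem_primeFactors hp)).2])
    · exact le_refl 0
  have hh1 : hfun g 1 = 1 := by simp [hfun]
  -- abbreviations
  set S : Finset ℕ := (Finset.Icc 1 ⌊Δ⌋₊).filter Squarefree with hSdef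
  set K : ℝ := ∑ d ∈ S, hfun g d * Real.log (Δ / (d:ℕ)) ^ 2 with hKdef
  set J : ℝ := ∑ d ∈ S, hfun g d with hJdef
  -- membership facts
  have hdS : ∀ d ∈ S, 1 ≤ d ∧ (d:ℝ) ≤ Δ ∧ Squarefree d := by
    intro d hd
    simp only [hSdef, Finset.mem_filter, Finset.mem_Icc] at hd
    refine ⟨hd.1.1, ?_, hd.2⟩
    calc (d:ℝ) ≤ (⌊Δ⌋₊:ℝ) := by exact_mod_cast hd.1.2
    _ ≤ Δ := Nat.floor_le hΔ0.le
  have hLnn : ∀ d : ℕ, 1 ≤ d → (d:ℝ) ≤ Δ → 0 ≤ Real.log (Δ / d) := by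
    intro d h1 h2
    apply Real.log_nonneg
    rw [le_div_iff₀ (by exact_mod_cast h1 : (0:ℝ) < (d:ℕ))]
    linarith
  have h1S : (1:ℕ) ∈ S := by
    simp only [hSdef, Finset.mem_filter, Finset.mem_Icc]
    exact ⟨⟨le_refl 1, Nat.le_floor (by exact_mod_cast hΔ1.le)⟩, squarefree_one⟩
  have hHge : Real.log Δ ≤ H := by
    rw [hH]
    have := Finset.single_le_sum (f := fun d : ℕ => hfun g d * Real.log (Δ / (d:ℕ)))
      (fun d hd => mul_nonneg (hh d) (hLnn d (hdS d hd).1 (hdS d hd).2.1)) h1S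
    simpa [hh1] using this
  have hH0 : 0 < H := lt_of_lt_of_le hlΔ hHge
  have hK0 : 0 ≤ K :=
    Finset.sum_nonneg fun d _ => mul_nonneg (hh d) (sq_nonneg _)
  have hJ1 : 1 ≤ J := by
    have := Finset.single_le_sum (f := fun d : ℕ => hfun g d)
      (fun d _ => hh d) h1S
    simpa [hh1] using this
  -- Cauchy–Schwarz : H² ≤ J K
  have hCS : H^2 ≤ J * K := by
    have h2 := Finset.sum_mul_sq_le_sq_mul_sq S
      (fun d => Real.sqrt (hfun g d))
      (fun d => Real.sqrt (hfun g d) * Real.log (Δ / d))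
    have e1 : ∀ d : ℕ, Real.sqrt (hfun g d) * (Real.sqrt (hfun g d) * Real.log (Δ / d))
        = hfun g d * Real.log (Δ / d) := by
      intro d; rw [← mul_assoc, Real.mul_self_sqrt (hh d)]
    have e2 : ∀ d : ℕ, Real.sqrt (hfun g d) ^ 2 = hfun g d := fun d => Real.sq_sqrt (hh d)
    have e3 : ∀ d : ℕ, (Real.sqrt (hfun g d) * Real.log (Δ / d)) ^ 2
        = hfun g d * Real.log (Δ / d) ^ 2 := by
      intro d; rw [mul_pow, Real.sq_sqrt (hh d)]
    simp only [e1, e2, e3] at h2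
    rw [hH]; exact h2
  -- key pointwise bounds
  have key : ∀ p : ℕ, p.Prime → ∀ d : ℕ, 1 ≤ d → (d:ℝ) ≤ Δ → Squarefree d → ¬ p ∣ d →
      (y d - y (p*d))^2 ≤ H⁻¹^2 * Real.log p ^ 2 ∧
      (y d - y (p*d))^2 ≤ H⁻¹^2 * Real.log (Δ / d) ^ 2 := by
    intro p hp d hd1 hdΔ hsq hnd
    have hd0 : (0:ℝ) < (d:ℝ) := by exact_mod_cast hd1
    have hp0 : (0:ℝ) < (p:ℝ) := by exact_mod_cast hp.pos
    have hp2 : (2:ℝ) ≤ (p:ℝ) := by exact_mod_cast hp.two_le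
    have hlp : 0 ≤ Real.log p := Real.log_nonneg (by linarith)
    have hLd : 0 ≤ Real.log (Δ / d) := hLnn d hd1 hdΔ
    have hyd : y d = H⁻¹ * Real.log (Δ / d) := by rw [hy d, if_pos ⟨hsq, hdΔ⟩]
    by_cases hpd : ((p*d : ℕ):ℝ) ≤ Δ
    · have hsq2 : Squarefree (p*d) := by
        rw [Nat.squarefree_mul ((Nat.Prime.coprime_iff_not_dvd hp).2 hnd)]
        exact ⟨hp.squarefree, hsq⟩
      have hypd : y (p*d) = H⁻¹ * Real.log (Δ / ((p:ℝ)*(d:ℝ))) := by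
        rw [hy (p*d), if_pos ⟨hsq2, hpd⟩]; push_cast; ring_nf
      have hlog : Real.log (Δ / d) - Real.log (Δ / ((p:ℝ)*d)) = Real.log p := by
        rw [Real.log_div (ne_of_gt hΔ0) (ne_of_gt hd0),
            Real.log_div (ne_of_gt hΔ0) (by positivity),
            Real.log_mul (ne_of_gt hp0) (ne_of_gt hd0)]
        ring
      have heq : y d - y (p*d) = H⁻¹ * Real.log p := by
        rw [hyd, hypd, ← hlog]; ring
      have hple : Real.log p ≤ Real.log (Δ / d) := by
        apply Real.log_le_log hp0
        rw [le_div_iff₀ hd0]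
        push_cast at hpd; linarith
      constructor
      · rw [heq, mul_pow]
      · rw [heq, mul_pow]
        exact mul_le_mul_of_nonneg_left (pow_le_pow_left₀ hlp hple 2) (by positivity)
    · have hypd : y (p*d) = 0 := by
        rw [hy (p*d), if_neg (fun hc => hpd hc.2)]
      have heq : y d - y (p*d) = H⁻¹ * Real.log (Δ / d) := by rw [hyd, hypd]; ring
      have hple : Real.log (Δ / d) ≤ Real.log p := by
        apply Real.log_le_log (by positivity)
        rw [div_le_iff₀ hd0]
        push_cast at hpd; linarith
      constructor
      · rw [heq, mul_pow]
        exact mul_le_mul_of_nonneg_left (pow_le_pow_left₀ hLd hple 2) (by positivity)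
      · rw [heq, mul_pow]

  -- inner sums over d, and their bounds
  have hDsub : ∀ p : ℕ, (Finset.Icc 1 ⌊Δ⌋₊).filter (fun d => Squarefree d ∧ ¬ p ∣ d) ⊆ S := by
    intro p d hd
    simp only [hSdef, Finset.mem_filter, Finset.mem_Icc] at *
    tauto
  have hDmem : ∀ p : ℕ, ∀ d ∈ (Finset.Icc 1 ⌊Δ⌋₊).filter (fun d => Squarefree d ∧ ¬ p ∣ d),
      1 ≤ d ∧ (d:ℝ) ≤ Δ ∧ Squarefree d ∧ ¬ p ∣ d := by
    intro p d hd
    have h1 := hdS d (hDsub p hd)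
    simp only [Finset.mem_filter, Finset.mem_Icc] at hd
    exact ⟨h1.1, h1.2.1, h1.2.2, hd.2.2⟩
  -- bound valid for every prime p : inner sum ≤ H⁻² K
  have hInnerK : ∀ p : ℕ, p.Prime →
      (∑ d ∈ (Finset.Icc 1 ⌊Δ⌋₊).filter (fun d => Squarefree d ∧ ¬ p ∣ d),
        hfun g d * (y d - y (p * d)) ^ 2) ≤ H⁻¹^2 * K := by
    intro p hp
    calc (∑ d ∈ (Finset.Icc 1 ⌊Δ⌋₊).filter (fun d => Squarefree d ∧ ¬ p ∣ d),
          hfun g d * (y d - y (p * d)) ^ 2)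
        ≤ ∑ d ∈ (Finset.Icc 1 ⌊Δ⌋₊).filter (fun d => Squarefree d ∧ ¬ p ∣ d),
          hfun g d * (H⁻¹^2 * Real.log (Δ / (d:ℕ)) ^ 2) := by
          apply Finset.sum_le_sum
          intro d hd
          obtain ⟨m1, m2, m3, m4⟩ := hDmem p d hd
          exact mul_le_mul_of_nonneg_left (key p hp d m1 m2 m3 m4).2 (hh d)
      _ ≤ ∑ d ∈ S, hfun g d * (H⁻¹^2 * Real.log (Δ / (d:ℕ)) ^ 2) := by
          apply Finset.sum_le_sum_of_subset_of_nonneg (hDsub p)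
          intro d _ _
          exact mul_nonneg (hh d) (by positivity)
      _ = H⁻¹^2 * K := by
          rw [hKdef, Finset.mul_sum]
          exact Finset.sum_congr rfl fun d _ => by ring
  -- quantities for small primes
  set B : ℝ := Real.log Δ - Real.log w with hBdef
  have hB0 : 0 < B := by simp only [hBdef]; linarith
  set Kw : ℝ := ∑ d ∈ S.filter (fun d : ℕ => (d:ℝ) ≤ w),
    hfun g d * Real.log (Δ / (d:ℕ)) ^ 2 with hKwdef
  set Jw : ℝ := ∑ d ∈ (Finset.Icc 1 ⌊Δ⌋₊).filter
    (fun d : ℕ => Squarefree d ∧ w < (d : ℝ)), hfun g d with hJwdef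
  have hKw0 : 0 ≤ Kw :=
    Finset.sum_nonneg fun d _ => mul_nonneg (hh d) (sq_nonneg _)
  have hJw0 : 0 ≤ Jw := Finset.sum_nonneg fun d _ => hh d
  -- bound for small primes
  have hInnerSmall : ∀ p : ℕ, p.Prime → (p:ℝ) ≤ w →
      (∑ d ∈ (Finset.Icc 1 ⌊Δ⌋₊).filter (fun d => Squarefree d ∧ ¬ p ∣ d),
        hfun g d * (y d - y (p * d)) ^ 2)
      ≤ Real.log p ^ 2 * (H⁻¹^2 * (Kw / B^2 + Jw)) := by
    intro p hp hpw
    have hsmall : ∑ d ∈ ((Finset.Icc 1 ⌊Δ⌋₊).filter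
        (fun d => Squarefree d ∧ ¬ p ∣ d)).filter (fun d : ℕ => (d:ℝ) ≤ w),
        hfun g d ≤ Kw / B^2 := by
      rw [le_div_iff₀ (by positivity)]
      calc (∑ d ∈ ((Finset.Icc 1 ⌊Δ⌋₊).filter
            (fun d => Squarefree d ∧ ¬ p ∣ d)).filter (fun d : ℕ => (d:ℝ) ≤ w),
            hfun g d) * B^2
          = ∑ d ∈ ((Finset.Icc 1 ⌊Δ⌋₊).filter
            (fun d => Squarefree d ∧ ¬ p ∣ d)).filter (fun d : ℕ => (d:ℝ) ≤ w),
            hfun g d * B^2 := Finset.sum_mul _ _ _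
        _ ≤ ∑ d ∈ ((Finset.Icc 1 ⌊Δ⌋₊).filter
            (fun d => Squarefree d ∧ ¬ p ∣ d)).filter (fun d : ℕ => (d:ℝ) ≤ w),
            hfun g d * Real.log (Δ / (d:ℕ)) ^ 2 := by
            apply Finset.sum_le_sum
            intro d hd
            have hdw : (d:ℝ) ≤ w := (Finset.mem_filter.1 hd).2
            obtain ⟨m1, m2, m3, _⟩ := hDmem p d (Finset.mem_of_mem_filter d hd)
            have hd0 : (0:ℝ) < (d:ℝ) := by exact_mod_cast m1
            have hBL : B ≤ Real.log (Δ / (d:ℕ)) := by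
              rw [Real.log_div (ne_of_gt hΔ0) (ne_of_gt hd0), hBdef]
              have : Real.log (d:ℝ) ≤ Real.log w := Real.log_le_log hd0 hdw
              linarith
            exact mul_le_mul_of_nonneg_left (pow_le_pow_left₀ hB0.le hBL 2) (hh d)
        _ ≤ Kw := by
            rw [hKwdef]
            apply Finset.sum_le_sum_of_subset_of_nonneg
            · intro d hd
              simp only [hSdef, Finset.mem_filter, Finset.mem_Icc] at *
              tauto
            · intro d _ _
              exact mul_nonneg (hh d) (sq_nonneg _)
    have hbig : ∑ d ∈ ((Finset.Icc 1 ⌊Δ⌋₊).filter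
        (fun d => Squarefree d ∧ ¬ p ∣ d)).filter (fun d : ℕ => ¬ (d:ℝ) ≤ w),
        hfun g d ≤ Jw := by
      rw [hJwdef]
      apply Finset.sum_le_sum_of_subset_of_nonneg
      · intro d hd
        simp only [Finset.mem_filter, Finset.mem_Icc] at *
        exact ⟨hd.1.1, hd.1.2.1, lt_of_not_ge hd.2⟩
      · intro d _ _
        exact hh d
    calc (∑ d ∈ (Finset.Icc 1 ⌊Δ⌋₊).filter (fun d => Squarefree d ∧ ¬ p ∣ d),
          hfun g d * (y d - y (p * d)) ^ 2)
        ≤ ∑ d ∈ (Finset.Icc 1 ⌊Δ⌋₊).filter (fun d => Squarefree d ∧ ¬ p ∣ d),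
          (H⁻¹^2 * Real.log p ^ 2) * hfun g d := by
          apply Finset.sum_le_sum
          intro d hd
          obtain ⟨m1, m2, m3, m4⟩ := hDmem p d hd
          calc hfun g d * (y d - y (p * d)) ^ 2
              ≤ hfun g d * (H⁻¹^2 * Real.log p ^ 2) :=
                mul_le_mul_of_nonneg_left (key p hp d m1 m2 m3 m4).1 (hh d)
            _ = (H⁻¹^2 * Real.log p ^ 2) * hfun g d := by ring
      _ = (H⁻¹^2 * Real.log p ^ 2) *
          ∑ d ∈ (Finset.Icc 1 ⌊Δ⌋₊).filter (fun d => Squarefree d ∧ ¬ p ∣ d),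
            hfun g d := (Finset.mul_sum _ _ _).symm
      _ ≤ (H⁻¹^2 * Real.log p ^ 2) * (Kw / B^2 + Jw) := by
          apply mul_le_mul_of_nonneg_left _ (by positivity)
          rw [← Finset.sum_filter_add_sum_filter_not
            ((Finset.Icc 1 ⌊Δ⌋₊).filter (fun d => Squarefree d ∧ ¬ p ∣ d))
            (fun d : ℕ => (d:ℝ) ≤ w)]
          exact add_le_add hsmall hbig
      _ = Real.log p ^ 2 * (H⁻¹^2 * (Kw / B^2 + Jw)) := by ring
  -- splitting inequality : Kw + K(w²,Δ) ≤ K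
  have hw2Δ : w^2 ≤ Δ := by nlinarith
  have hKsplit : Kw + (Kfun g Δ Δ - Kfun g Δ (w^2)) ≤ K := by
    have hfl : ⌊w^2⌋₊ ≤ ⌊Δ⌋₊ := Nat.floor_mono hw2Δ
    have hKΔ : Kfun g Δ Δ = K := by rw [hKdef, hSdef]; rfl
    have e : Kfun g Δ (w^2) = ∑ d ∈ S.filter (fun d : ℕ => d ≤ ⌊w^2⌋₊),
        hfun g d * Real.log (Δ / (d:ℕ)) ^ 2 := by
      unfold Kfun
      apply Finset.sum_congr _ (fun _ _ => rfl)
      ext d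
      simp only [hSdef, Finset.mem_filter, Finset.mem_Icc]
      constructor
      · rintro ⟨⟨h1, h2⟩, h3⟩
        exact ⟨⟨⟨h1, le_trans h2 hfl⟩, h3⟩, h2⟩
      · rintro ⟨⟨⟨h1, _⟩, h3⟩, h4⟩
        exact ⟨⟨h1, h4⟩, h3⟩
    have e2 : Kfun g Δ Δ - Kfun g Δ (w^2)
        = ∑ d ∈ S.filter (fun d : ℕ => ¬ d ≤ ⌊w^2⌋₊),
          hfun g d * Real.log (Δ / (d:ℕ)) ^ 2 := by
      rw [hKΔ, e, hKdef, ← Finset.sum_filter_add_sum_filter_not S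
        (fun d : ℕ => d ≤ ⌊w^2⌋₊) (fun d : ℕ => hfun g d * Real.log (Δ / (d:ℕ)) ^ 2)]
      ring
    rw [e2, hKwdef, hKdef]
    have hdisj : Disjoint (S.filter (fun d : ℕ => (d:ℝ) ≤ w))
        (S.filter (fun d : ℕ => ¬ d ≤ ⌊w^2⌋₊)) := by
      rw [Finset.disjoint_left]
      intro d hd1 hd2
      have hdw : (d:ℝ) ≤ w := (Finset.mem_filter.1 hd1).2
      have hd2' : ¬ d ≤ ⌊w^2⌋₊ := (Finset.mem_filter.1 hd2).2
      apply hd2'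
      calc d ≤ ⌊w⌋₊ := Nat.le_floor hdw
        _ ≤ ⌊w^2⌋₊ := Nat.floor_mono (by nlinarith)
    rw [← Finset.sum_union hdisj]
    apply Finset.sum_le_sum_of_subset_of_nonneg
    · exact Finset.union_subset (Finset.filter_subset _ _) (Finset.filter_subset _ _)
    · intro d _ _
      exact mul_nonneg (hh d) (sq_nonneg _)
  -- the coefficient inequality for small primes
  have hcoef : 3/2 * Real.log w ^ 2 * (H⁻¹^2 * (Kw / B^2 + Jw))
      ≤ 9/2 * (Real.log w / Real.log Δ)^2 * (H⁻¹^2 * K) := by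
    have hBB : Real.log Δ ^ 2 ≤ 3 * B^2 := by
      rw [hBdef]
      nlinarith [sq_nonneg (Real.log Δ - 3 * Real.log w),
        mul_nonneg hlw.le (by linarith : (0:ℝ) ≤ 2 * Real.log Δ - 5 * Real.log w)]
    have h1 : Kw / B^2 ≤ 3 * Kw / Real.log Δ ^ 2 := by
      rw [div_le_div_iff₀ (by positivity) (by positivity)]
      nlinarith [mul_le_mul_of_nonneg_left hBB hKw0]
    have h2 : Jw ≤ 3 * (Kfun g Δ Δ - Kfun g Δ (w^2)) / Real.log Δ ^ 2 := by
      rw [le_div_iff₀ (by positivity)]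
      calc Jw * Real.log Δ ^ 2 ≤ 3 * (Kfun g Δ Δ - Kfun g Δ (w ^ 2)) := hA2
        _ = 3 * (Kfun g Δ Δ - Kfun g Δ (w ^ 2)) := rfl
    have h4 : Kw / B^2 + Jw ≤ 3 * K / Real.log Δ ^ 2 := by
      have : 3 * Kw / Real.log Δ ^ 2 + 3 * (Kfun g Δ Δ - Kfun g Δ (w^2)) / Real.log Δ ^ 2
          ≤ 3 * K / Real.log Δ ^ 2 := by
        rw [← add_div, div_le_div_iff₀ (by positivity) (by positivity)]
        nlinarith [hKsplit, sq_nonneg (Real.log Δ)]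
      linarith
    have h5 : 0 ≤ (3:ℝ)/2 * Real.log w ^ 2 * H⁻¹^2 := by positivity
    calc 3/2 * Real.log w ^ 2 * (H⁻¹^2 * (Kw / B^2 + Jw))
        = (3/2 * Real.log w ^ 2 * H⁻¹^2) * (Kw / B^2 + Jw) := by ring
      _ ≤ (3/2 * Real.log w ^ 2 * H⁻¹^2) * (3 * K / Real.log Δ ^ 2) :=
          mul_le_mul_of_nonneg_left h4 h5
      _ = 9/2 * (Real.log w / Real.log Δ)^2 * (H⁻¹^2 * K) := by
          field_simp
          ring
  -- now bound the full subtracted sum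
  set Sν : ℝ := ∑ p ∈ (Finset.range (⌊z⌋₊ + 1)).filter
    (fun p : ℕ => p.Prime ∧ w < (p : ℝ) ∧ (p : ℝ) ≤ z), g p with hSνdef
  set P : Finset ℕ := (Finset.range ⌈z⌉₊).filter (fun p : ℕ => p.Prime ∧ (p : ℝ) < z)
    with hPdef
  have hPmem : ∀ p ∈ P, p.Prime ∧ (p:ℝ) < z := by
    intro p hp
    simp only [hPdef, Finset.mem_filter, Finset.mem_range] at hp
    exact hp.2
  set T : ℝ := ∑ p ∈ P,
    g p * ∑ d ∈ (Finset.Icc 1 ⌊Δ⌋₊).filter (fun d => Squarefree d ∧ ¬ p ∣ d),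
      hfun g d * (y d - y (p * d)) ^ 2 with hTdef
  have hT1 : ∑ p ∈ P.filter (fun p : ℕ => w < (p:ℝ)),
      (g p * ∑ d ∈ (Finset.Icc 1 ⌊Δ⌋₊).filter (fun d => Squarefree d ∧ ¬ p ∣ d),
        hfun g d * (y d - y (p * d)) ^ 2) ≤ Sν * (H⁻¹^2 * K) := by
    calc ∑ p ∈ P.filter (fun p : ℕ => w < (p:ℝ)),
          (g p * ∑ d ∈ (Finset.Icc 1 ⌊Δ⌋₊).filter (fun d => Squarefree d ∧ ¬ p ∣ d),
            hfun g d * (y d - y (p * d)) ^ 2)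
        ≤ ∑ p ∈ P.filter (fun p : ℕ => w < (p:ℝ)), g p * (H⁻¹^2 * K) := by
          apply Finset.sum_le_sum
          intro p hp
          have hp' := hPmem p (Finset.mem_of_mem_filter p hp)
          exact mul_le_mul_of_nonneg_left (hInnerK p hp'.1) (hgp p hp'.1).1
      _ = (∑ p ∈ P.filter (fun p : ℕ => w < (p:ℝ)), g p) * (H⁻¹^2 * K) :=
          (Finset.sum_mul _ _ _).symm
      _ ≤ Sν * (H⁻¹^2 * K) := by
          apply mul_le_mul_of_nonneg_right _ (by positivity)
          rw [hSνdef]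
          apply Finset.sum_le_sum_of_subset_of_nonneg
          · intro p hp
            simp only [hPdef, Finset.mem_filter, Finset.mem_range] at hp
            simp only [Finset.mem_filter, Finset.mem_range]
            refine ⟨Nat.lt_succ_of_le (Nat.le_floor hp.1.2.2.le), hp.1.2.1, hp.2, hp.1.2.2.le⟩
          · intro p hp _
            simp only [Finset.mem_filter] at hp
            exact (hgp p hp.2.1).1
  have hT2 : ∑ p ∈ P.filter (fun p : ℕ => ¬ w < (p:ℝ)),
      (g p * ∑ d ∈ (Finset.Icc 1 ⌊Δ⌋₊).filter (fun d => Squarefree d ∧ ¬ p ∣ d),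
        hfun g d * (y d - y (p * d)) ^ 2)
      ≤ 9/2 * (Real.log w / Real.log Δ)^2 * (H⁻¹^2 * K) := by
    have hc0 : 0 ≤ H⁻¹^2 * (Kw / B^2 + Jw) := by positivity
    calc ∑ p ∈ P.filter (fun p : ℕ => ¬ w < (p:ℝ)),
          (g p * ∑ d ∈ (Finset.Icc 1 ⌊Δ⌋₊).filter (fun d => Squarefree d ∧ ¬ p ∣ d),
            hfun g d * (y d - y (p * d)) ^ 2)
        ≤ ∑ p ∈ P.filter (fun p : ℕ => ¬ w < (p:ℝ)),
            (g p * Real.log p ^ 2) * (H⁻¹^2 * (Kw / B^2 + Jw)) := by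
          apply Finset.sum_le_sum
          intro p hp
          have hp' := hPmem p (Finset.mem_of_mem_filter p hp)
          have hpw : (p:ℝ) ≤ w := not_lt.1 (Finset.mem_filter.1 hp).2
          calc g p * ∑ d ∈ (Finset.Icc 1 ⌊Δ⌋₊).filter (fun d => Squarefree d ∧ ¬ p ∣ d),
                hfun g d * (y d - y (p * d)) ^ 2
              ≤ g p * (Real.log p ^ 2 * (H⁻¹^2 * (Kw / B^2 + Jw))) :=
                mul_le_mul_of_nonneg_left (hInnerSmall p hp'.1 hpw) (hgp p hp'.1).1
            _ = (g p * Real.log p ^ 2) * (H⁻¹^2 * (Kw / B^2 + Jw)) := by ring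
      _ = (∑ p ∈ P.filter (fun p : ℕ => ¬ w < (p:ℝ)), g p * Real.log p ^ 2) *
            (H⁻¹^2 * (Kw / B^2 + Jw)) := (Finset.sum_mul _ _ _).symm
      _ ≤ (3/2 * Real.log w ^ 2) * (H⁻¹^2 * (Kw / B^2 + Jw)) := by
          apply mul_le_mul_of_nonneg_right _ hc0
          refine le_trans ?_ hA1
          apply Finset.sum_le_sum_of_subset_of_nonneg
          · intro p hp
            simp only [hPdef, Finset.mem_filter, Finset.mem_range] at hp
            simp only [Finset.mem_filter, Finset.mem_range]
            exact ⟨Nat.lt_succ_of_le (Nat.le_floor (not_lt.1 hp.2)), hp.1.2.1⟩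
          · intro p hp _
            simp only [Finset.mem_filter] at hp
            exact mul_nonneg (hgp p hp.2).1 (sq_nonneg _)
      _ ≤ 9/2 * (Real.log w / Real.log Δ)^2 * (H⁻¹^2 * K) := by
          calc (3/2 * Real.log w ^ 2) * (H⁻¹^2 * (Kw / B^2 + Jw))
              = 3/2 * Real.log w ^ 2 * (H⁻¹^2 * (Kw / B^2 + Jw)) := by ring
            _ ≤ 9/2 * (Real.log w / Real.log Δ)^2 * (H⁻¹^2 * K) := hcoef
  have hT : T ≤ (Sν + 9/2 * (Real.log w / Real.log Δ)^2) * (H⁻¹^2 * K) := by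
    rw [hTdef, ← Finset.sum_filter_add_sum_filter_not P (fun p : ℕ => w < (p:ℝ))]
    calc (∑ p ∈ P.filter (fun p : ℕ => w < (p:ℝ)),
          (g p * ∑ d ∈ (Finset.Icc 1 ⌊Δ⌋₊).filter (fun d => Squarefree d ∧ ¬ p ∣ d),
            hfun g d * (y d - y (p * d)) ^ 2))
        + ∑ p ∈ P.filter (fun p : ℕ => ¬ w < (p:ℝ)),
          (g p * ∑ d ∈ (Finset.Icc 1 ⌊Δ⌋₊).filter (fun d => Squarefree d ∧ ¬ p ∣ d),
            hfun g d * (y d - y (p * d)) ^ 2)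
        ≤ Sν * (H⁻¹^2 * K) + 9/2 * (Real.log w / Real.log Δ)^2 * (H⁻¹^2 * K) :=
          add_le_add hT1 hT2
      _ = (Sν + 9/2 * (Real.log w / Real.log Δ)^2) * (H⁻¹^2 * K) := by ring
  -- the first sum in W equals H⁻² K
  have hW1 : (∑ d ∈ S, hfun g d * y d ^ 2) = H⁻¹^2 * K := by
    rw [hKdef, Finset.mul_sum]
    apply Finset.sum_congr rfl
    intro d hd
    obtain ⟨m1, m2, m3⟩ := hdS d hd
    rw [hy d, if_pos ⟨m3, m2⟩]
    ring
  -- conclude : W ≥ H⁻² K ν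
  have hWge : H⁻¹^2 * K * ν ≤ W := by
    have hAν : H⁻¹^2 * K * ν
        = H⁻¹^2 * K - (Sν + 9/2 * (Real.log w / Real.log Δ)^2) * (H⁻¹^2 * K) := by
      rw [hν]; ring
    rw [hW, hW1]
    rw [hAν]
    linarith [hT]
  -- final step via Cauchy–Schwarz
  have h4 : J * (H⁻¹^2 * K * ν) ≤ J * W :=
    mul_le_mul_of_nonneg_left hWge (by linarith)
  have h5 : ν ≤ J * (H⁻¹^2 * K * ν) := by
    have hH2 : (0:ℝ) < H^2 := by positivity
    have h6 : 1 ≤ J * K / H^2 := (one_le_div hH2).2 hCS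
    have h7 : ν * 1 ≤ ν * (J * K / H^2) := mul_le_mul_of_nonneg_left h6 hνpos.le
    calc ν = ν * 1 := (mul_one ν).symm
      _ ≤ ν * (J * K / H^2) := h7
      _ = J * (H⁻¹^2 * K * ν) := by
          rw [inv_pow, div_eq_mul_inv]
          ring
  exact le_trans h5 h4
end

section
/- Let C > 0, w ≥ 2 and x ≥ 2 with w¹² ≤ x, and let (r_d) be reals indexed by squarefree d satisfying |r_d| ≤ C τ₃(d) √(x/d) for all squarefree d ≤ x. Then (log x) Σ_{d < √x w⁶, d squarefree} τ₃(d) |r_d| ≤ C' C w³ x^{3/4} (log x)^{10} for an absolute constant C'. -/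
open Finset
open ArithmeticFunction
open scoped ArithmeticFunction.zeta

/-- The 3-fold divisor function `τ₃(d) = Σ_{e | d} τ(e)`. -/
def tau3 (d : ℕ) : ℕ := ∑ e ∈ d.divisors, e.divisors.card


lemma tau3_eq (d : ℕ) : tau3 d = (ζ ^ 3 : ArithmeticFunction ℕ) d := by
  have h2 : ∀ e : ℕ, (ζ * ζ : ArithmeticFunction ℕ) e = e.divisors.card := by
    intro e
    rw [zeta_mul_apply]
    rw [Finset.card_eq_sum_ones]
    refine Finset.sum_congr rfl fun i hi => ?_
    exact zeta_apply_ne (Nat.pos_of_mem_divisors hi).ne'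
  have : (ζ ^ 3 : ArithmeticFunction ℕ) = ζ * (ζ * ζ) := by ring
  rw [this, zeta_mul_apply, tau3]
  exact (Finset.sum_congr rfl fun e _ => h2 e).symm

lemma isMult_zeta_pow (k : ℕ) : IsMultiplicative (ζ ^ k : ArithmeticFunction ℕ) := by
  induction k with
  | zero => simpa using isMultiplicative_one
  | succ n ih => rw [pow_succ]; exact ih.mul isMultiplicative_zeta

lemma zeta_pow_apply_prime {p : ℕ} (hp : p.Prime) (k : ℕ) :
    (ζ ^ k : ArithmeticFunction ℕ) p = k := by
  induction k with
  | zero =>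
    simp [ArithmeticFunction.one_apply, hp.ne_one]
  | succ n ih =>
    rw [pow_succ, mul_zeta_apply, hp.divisors]
    rw [Finset.sum_insert (by simp [hp.ne_one, eq_comm]), Finset.sum_singleton]
    rw [ih, (isMult_zeta_pow n).map_one]; omega

lemma zeta_pow_squarefree {n : ℕ} (hn : Squarefree n) (k : ℕ) :
    (ζ ^ k : ArithmeticFunction ℕ) n = k ^ n.primeFactors.card := by
  conv_lhs => rw [← Nat.prod_primeFactors_of_squarefree hn]
  rw [IsMultiplicative.map_prod_of_subset_primeFactors (isMult_zeta_pow k) n _ subset_rfl]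
  rw [Finset.prod_congr rfl fun p hp =>
    zeta_pow_apply_prime (Nat.prime_of_mem_primeFactors hp) k]
  simp [Finset.prod_const]

lemma conv_sum_le (f g : ArithmeticFunction ℕ) (D : ℕ) :
    ∑ n ∈ range D, ((f * g) n : ℝ) / n ≤
      (∑ n ∈ range D, (f n : ℝ) / n) * (∑ n ∈ range D, (g n : ℝ) / n) := by
  have key : ∀ n ∈ range D, ((f * g) n : ℝ) / n =
      ∑ p ∈ n.divisorsAntidiagonal, ((f p.1 : ℝ) / p.1) * ((g p.2 : ℝ) / p.2) := by
    intro n _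
    rw [mul_apply]
    push_cast
    rw [Finset.sum_div]
    refine Finset.sum_congr rfl fun p hp => ?_
    obtain ⟨h1, h2⟩ := Nat.mem_divisorsAntidiagonal.mp hp
    have hp1 : p.1 ≠ 0 := fun h => h2 (by rw [← h1, h, zero_mul])
    have hp2 : p.2 ≠ 0 := fun h => h2 (by rw [← h1, h, mul_zero])
    rw [← h1]
    push_cast
    field_simp
  rw [Finset.sum_congr rfl key]
  have hdisj : (↑(range D) : Set ℕ).PairwiseDisjoint Nat.divisorsAntidiagonal := by
    intro a _ b _ hab
    refine Finset.disjoint_left.mpr fun p hp hp' => hab ?_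
    rw [← (Nat.mem_divisorsAntidiagonal.mp hp).1, (Nat.mem_divisorsAntidiagonal.mp hp').1]
  rw [← Finset.sum_biUnion hdisj]
  have hsub : (range D).biUnion Nat.divisorsAntidiagonal ⊆ range D ×ˢ range D := by
    intro p hp
    obtain ⟨n, hn, hpn⟩ := Finset.mem_biUnion.mp hp
    obtain ⟨h1, h2⟩ := Nat.mem_divisorsAntidiagonal.mp hpn
    rw [Finset.mem_range] at hn
    refine Finset.mem_product.mpr ⟨Finset.mem_range.mpr ?_, Finset.mem_range.mpr ?_⟩
    · exact lt_of_le_of_lt (Nat.le_of_dvd (Nat.pos_of_ne_zero h2) ⟨p.2, h1.symm⟩) hn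
    · exact lt_of_le_of_lt (Nat.le_of_dvd (Nat.pos_of_ne_zero h2) ⟨p.1, by rw [← h1, mul_comm]⟩) hn
  calc ∑ p ∈ (range D).biUnion Nat.divisorsAntidiagonal,
        ((f p.1 : ℝ) / p.1) * ((g p.2 : ℝ) / p.2)
      ≤ ∑ p ∈ range D ×ˢ range D, ((f p.1 : ℝ) / p.1) * ((g p.2 : ℝ) / p.2) := by
        refine Finset.sum_le_sum_of_subset_of_nonneg hsub fun p _ _ => ?_
        positivity
    _ = _ := by
        rw [Finset.sum_product]
        rw [← Finset.sum_mul_sum (range D) (range D) (fun i => (f i : ℝ)/i) (fun j => (g j : ℝ)/j)]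

lemma zeta_pow_sum_le (D k : ℕ) :
    ∑ n ∈ range D, ((ζ ^ k : ArithmeticFunction ℕ) n : ℝ) / n ≤
      (∑ n ∈ range D, ((ζ : ArithmeticFunction ℕ) n : ℝ) / n) ^ k := by
  induction k with
  | zero =>
    simp only [pow_zero]
    have : ∀ n ∈ range D, ((1 : ArithmeticFunction ℕ) n : ℝ) / n =
        if n = 1 then 1 else 0 := by
      intro n _
      rw [ArithmeticFunction.one_apply]
      split <;> simp_all
    rw [Finset.sum_congr rfl this, Finset.sum_ite_eq' (range D) 1 (fun _ => (1:ℝ))]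
    split <;> norm_num
  | succ n ih =>
    rw [pow_succ, pow_succ]
    calc ∑ m ∈ range D, ((ζ ^ n * ζ : ArithmeticFunction ℕ) m : ℝ) / m
        ≤ (∑ m ∈ range D, ((ζ ^ n : ArithmeticFunction ℕ) m : ℝ) / m) *
          (∑ m ∈ range D, ((ζ : ArithmeticFunction ℕ) m : ℝ) / m) := conv_sum_le _ _ D
      _ ≤ _ := by
          refine mul_le_mul_of_nonneg_right ih ?_
          refine Finset.sum_nonneg fun m _ => by positivity

lemma harmonic_le (D : ℕ) :
    ∑ n ∈ range (D + 1), ((ζ : ArithmeticFunction ℕ) n : ℝ) / n ≤ 1 + Real.log D := by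
  induction D with
  | zero => simp [zeta_apply]
  | succ m ih =>
    rw [Finset.sum_range_succ]
    have hz : ((ζ : ArithmeticFunction ℕ) (m + 1) : ℝ) = 1 := by
      rw [zeta_apply_ne (Nat.succ_ne_zero m)]; norm_num
    rw [hz]
    rcases Nat.eq_zero_or_pos m with rfl | hm
    · rw [Finset.sum_range_one]
      simp [zeta_apply]
    · have hlog : (1 : ℝ) / (m + 1) ≤ Real.log (m + 1) - Real.log m := by
        have hm' : (0 : ℝ) < m := by exact_mod_cast hm
        have := Real.log_le_sub_one_of_pos (x := (m : ℝ) / (m + 1)) (by positivity)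
        rw [Real.log_div hm'.ne' (by positivity)] at this
        have : (m : ℝ) / (m + 1) - 1 = -(1 / (m + 1)) := by field_simp; ring
        linarith [Real.log_le_sub_one_of_pos (x := (m : ℝ) / (m + 1)) (by positivity),
          Real.log_div hm'.ne' (show ((m : ℝ) + 1) ≠ 0 by positivity)]
      push_cast
      push_cast at ih
      linarith


/-- **Bound for the sieve remainder.** There is an absolute constant `C'` such that
if `C > 0`, `w ≥ 2`, `x ≥ 2` with `w¹² ≤ x`, and `|r_d| ≤ C τ₃(d) √(x/d)` for all
squarefree `d ≤ x`, then
`(log x) Σ_{d < √x w⁶, d squarefree} τ₃(d) |r_d| ≤ C' C w³ x^{3/4} (log x)^{10}`. -/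
theorem remainder_bound :
    ∃ C' : ℝ, 0 < C' ∧
      ∀ (C w x : ℝ) (r : ℕ → ℝ), 0 < C → 2 ≤ w → 2 ≤ x → w ^ 12 ≤ x →
        (∀ d : ℕ, Squarefree d → (d : ℝ) ≤ x →
          |r d| ≤ C * tau3 d * Real.sqrt (x / d)) →
        Real.log x *
            ∑ d ∈ (Finset.range ⌈Real.sqrt x * w ^ 6⌉₊).filter
              (fun d : ℕ => Squarefree d ∧ (d : ℝ) < Real.sqrt x * w ^ 6),
                (tau3 d : ℝ) * |r d|
          ≤ C' * C * w ^ 3 * x ^ ((3 : ℝ) / 4) * Real.log x ^ 10 := by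
  refine ⟨262144, by norm_num, ?_⟩
  intro C w x r hC hw hx hwx hr
  set L : ℝ := Real.sqrt x * w ^ 6 with hLdef
  set D : ℕ := ⌈L⌉₊ with hDdef
  have hx0 : (0 : ℝ) < x := by linarith
  have hw0 : (0 : ℝ) < w := by linarith
  have hsx : 0 < Real.sqrt x := Real.sqrt_pos.mpr hx0
  have hL0 : 0 < L := by positivity
  have hw6le : w ^ 6 ≤ Real.sqrt x := by
    have h1 : w ^ 12 = (w ^ 6) ^ 2 := by ring
    have h2 : Real.sqrt (w ^ 12) ≤ Real.sqrt x := Real.sqrt_le_sqrt hwx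
    rwa [h1, Real.sqrt_sq (by positivity)] at h2
  have hLx : L ≤ x := by
    calc L = Real.sqrt x * w ^ 6 := rfl
    _ ≤ Real.sqrt x * Real.sqrt x := by
        exact mul_le_mul_of_nonneg_left hw6le hsx.le
    _ = x := Real.mul_self_sqrt hx0.le
  have hlogx : 0 < Real.log x := Real.log_pos (by linarith)
  have hlog2 : 1 ≤ 2 * Real.log x := by
    have := Real.log_le_log (by norm_num : (0:ℝ) < 2) hx
    have h2 := Real.log_two_gt_d9
    linarith
  have hD1 : 1 ≤ D := Nat.one_le_ceil_iff.mpr hL0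
  set H : ℝ := ∑ n ∈ range D, ((ζ : ArithmeticFunction ℕ) n : ℝ) / n with hHdef
  have hH0 : 0 ≤ H := Finset.sum_nonneg fun n _ => by positivity
  have hHle : H ≤ 1 + Real.log D := by
    calc H ≤ ∑ n ∈ range (D + 1), ((ζ : ArithmeticFunction ℕ) n : ℝ) / n := by
          refine Finset.sum_le_sum_of_subset_of_nonneg
            (Finset.range_subset_range.mpr (Nat.le_succ D)) fun n _ _ => by positivity
      _ ≤ 1 + Real.log D := harmonic_le D
  have hlogD : Real.log D ≤ 2 * Real.log x := by
    have hDle : (D : ℝ) ≤ x ^ 2 := by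
      have := Nat.ceil_lt_add_one hL0.le
      nlinarith [hLx, hx]
    have hD0 : (0 : ℝ) < D := by exact_mod_cast hD1
    calc Real.log D ≤ Real.log (x ^ 2) := Real.log_le_log hD0 hDle
      _ = 2 * Real.log x := by rw [Real.log_pow]; norm_num
  have hH4 : H ≤ 4 * Real.log x := by linarith
  set A : ℝ := Real.sqrt x * Real.sqrt L with hAdef
  have hA0 : 0 ≤ A := by positivity
  -- pointwise bound
  have key : ∀ d ∈ (range D).filter (fun d : ℕ => Squarefree d ∧ (d : ℝ) < L),
      (tau3 d : ℝ) * |r d| ≤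
        C * A * (((ζ ^ 9 : ArithmeticFunction ℕ) d : ℝ) / d) := by
    intro d hd
    obtain ⟨-, hsq, hdL⟩ := Finset.mem_filter.mp hd
    have hd0 : 0 < d := Nat.pos_of_ne_zero hsq.ne_zero
    have hdR : (0 : ℝ) < d := by exact_mod_cast hd0
    have hdx : (d : ℝ) ≤ x := le_of_lt (lt_of_lt_of_le hdL hLx)
    have h1 : |r d| ≤ C * tau3 d * Real.sqrt (x / d) := hr d hsq hdx
    have hsqle : Real.sqrt (x / d) ≤ Real.sqrt x * Real.sqrt L / d := by
      rw [Real.sqrt_div hx0.le]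
      rw [div_le_div_iff₀ (Real.sqrt_pos.mpr hdR) hdR]
      calc Real.sqrt x * d = Real.sqrt x * (Real.sqrt d * Real.sqrt d) := by
            rw [Real.mul_self_sqrt hdR.le]
        _ ≤ Real.sqrt x * (Real.sqrt L * Real.sqrt d) := by
            refine mul_le_mul_of_nonneg_left
              (mul_le_mul_of_nonneg_right (Real.sqrt_le_sqrt hdL.le)
                (Real.sqrt_nonneg _)) (Real.sqrt_nonneg _)
        _ = Real.sqrt x * Real.sqrt L * Real.sqrt d := by ring
    have h9 : (tau3 d) ^ 2 = (ζ ^ 9 : ArithmeticFunction ℕ) d := by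
      rw [tau3_eq, zeta_pow_squarefree hsq 3, zeta_pow_squarefree hsq 9, ← pow_mul,
        pow_mul']
      norm_num
    have h9R : ((tau3 d : ℝ)) ^ 2 = ((ζ ^ 9 : ArithmeticFunction ℕ) d : ℝ) := by
      exact_mod_cast congrArg (Nat.cast (R := ℝ)) h9
    have htau0 : (0 : ℝ) ≤ (tau3 d : ℝ) := by positivity
    calc (tau3 d : ℝ) * |r d| ≤ (tau3 d : ℝ) * (C * tau3 d * Real.sqrt (x / d)) :=
          mul_le_mul_of_nonneg_left h1 htau0
      _ ≤ (tau3 d : ℝ) * (C * tau3 d * (Real.sqrt x * Real.sqrt L / d)) := by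
          refine mul_le_mul_of_nonneg_left (mul_le_mul_of_nonneg_left hsqle ?_) htau0
          positivity
      _ = C * A * (((tau3 d : ℝ)) ^ 2 / d) := by rw [hAdef]; ring
      _ = C * A * (((ζ ^ 9 : ArithmeticFunction ℕ) d : ℝ) / d) := by rw [h9R]
  have hsum : ∑ d ∈ (range D).filter (fun d : ℕ => Squarefree d ∧ (d : ℝ) < L),
      (tau3 d : ℝ) * |r d| ≤ C * A * (4 * Real.log x) ^ 9 := by
    calc ∑ d ∈ (range D).filter (fun d : ℕ => Squarefree d ∧ (d : ℝ) < L),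
          (tau3 d : ℝ) * |r d|
        ≤ ∑ d ∈ (range D).filter (fun d : ℕ => Squarefree d ∧ (d : ℝ) < L),
          C * A * (((ζ ^ 9 : ArithmeticFunction ℕ) d : ℝ) / d) :=
          Finset.sum_le_sum key
      _ ≤ ∑ d ∈ range D, C * A * (((ζ ^ 9 : ArithmeticFunction ℕ) d : ℝ) / d) := by
          refine Finset.sum_le_sum_of_subset_of_nonneg (Finset.filter_subset _ _)
            fun d _ _ => by positivity
      _ = C * A * ∑ d ∈ range D, (((ζ ^ 9 : ArithmeticFunction ℕ) d : ℝ) / d) := by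
          rw [Finset.mul_sum]
      _ ≤ C * A * H ^ 9 := by
          refine mul_le_mul_of_nonneg_left (zeta_pow_sum_le D 9) (by positivity)
      _ ≤ C * A * (4 * Real.log x) ^ 9 := by
          refine mul_le_mul_of_nonneg_left (pow_le_pow_left₀ hH0 hH4 9) (by positivity)
  have hAeq : A = x ^ ((3 : ℝ) / 4) * w ^ 3 := by
    rw [hAdef, hLdef, Real.sqrt_mul (Real.sqrt_nonneg x)]
    have hw3 : Real.sqrt (w ^ 6) = w ^ 3 := by
      rw [show w ^ 6 = (w ^ 3) ^ 2 by ring, Real.sqrt_sq (by positivity)]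
    rw [hw3]
    have h14 : Real.sqrt (Real.sqrt x) = x ^ ((1 : ℝ) / 4) := by
      rw [Real.sqrt_eq_rpow, Real.sqrt_eq_rpow, ← Real.rpow_mul hx0.le]
      norm_num
    rw [h14, Real.sqrt_eq_rpow, ← mul_assoc, ← Real.rpow_add hx0]
    norm_num
  calc Real.log x * ∑ d ∈ (range D).filter (fun d : ℕ => Squarefree d ∧ (d : ℝ) < L),
        (tau3 d : ℝ) * |r d|
      ≤ Real.log x * (C * A * (4 * Real.log x) ^ 9) :=
        mul_le_mul_of_nonneg_left hsum hlogx.le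
    _ = 262144 * C * w ^ 3 * x ^ ((3 : ℝ) / 4) * Real.log x ^ 10 := by
        rw [hAeq, mul_pow]
        norm_num
        ring
end
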